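/- (Multilevel Monte Carlo complexity, case β = γ.) Assume M1–M3 hold with β = γ and α ≥ ½ min(β, γ). Then there exists a constant K > 0, depending only on α, β, γ, c₁, c₂, c₃, M and h₀, such that for every 0 < ε < e^{−1} there exist a level L ∈ ℕ and positive integers N_0, …, N_L with MSE(L, (N_ℓ)) ≤ ε² and Cost(L, (N_ℓ)) ≤ K ε^{−2} (log ε)². -/

import Mathlib

set_option maxHeartbeats 1000000


open MeasureTheory ProbabilityTheory Finset

private lemma div_le_div_of_nonneg_right' {a b c : ℝ} (h : a ≤ b) (hc : 0 < c) :
    a / c ≤ b / c := by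
  apply div_le_div_of_nonneg_right h hc.le

private lemma div_le_div_of_nonneg_left' {a b c : ℝ} (ha : 0 ≤ a) (hb : 0 < b)
    (h : b ≤ c) : a / c ≤ a / b := by
  apply div_le_div_of_nonneg_left ha hb h

/-- Multilevel Monte Carlo complexity theorem, case `β = γ`: under M1–M3 with
`α ≥ ½ min(β,γ)`, for every `0 < ε < e⁻¹` there are a level `L` and sample
numbers `N_ℓ` such that the MLMC mean square error is at most `ε²` and the
total cost is at most `K ε⁻² (log ε)²`, with `K` independent of `ε`. -/
theorem mlmc_complexity_beta_eq_gamma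
    {Ω : Type*} [MeasurableSpace Ω] {P : Measure Ω} [IsProbabilityMeasure P]
    (M : ℕ) (hM : 2 ≤ M) (h₀ : ℝ) (hh₀ : 0 < h₀)
    (Q : Ω → ℝ) (hQ : MemLp Q 2 P)
    (Qlev : ℕ → Ω → ℝ) (hQlev : ∀ ℓ, MemLp (Qlev ℓ) 2 P)
    (Y : ℕ → Ω → ℝ) (hY0 : Y 0 = Qlev 0)
    (hYl : ∀ ℓ : ℕ, Y (ℓ + 1) = fun ω => Qlev (ℓ + 1) ω - Qlev ℓ ω)
    (α β γ c₁ c₂ c₃ : ℝ)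
    (hα : 0 < α) (hβ : 0 < β) (hγ : 0 < γ) (hc₁ : 0 < c₁) (hc₂ : 0 < c₂) (hc₃ : 0 < c₃)
    (hβγ : β = γ) (hαβγ : α ≥ min β γ / 2)
    (hM1 : ∀ ℓ : ℕ, |∫ ω, (Qlev ℓ ω - Q ω) ∂P| ≤ c₁ * (h₀ / (M : ℝ) ^ ℓ) ^ α)
    (hM2 : ∀ ℓ : ℕ, variance (Y ℓ) P ≤ c₂ * (h₀ / (M : ℝ) ^ ℓ) ^ β) :
    ∃ K : ℝ, 0 < K ∧ ∀ ε : ℝ, 0 < ε → ε < Real.exp (-1) →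
      ∃ (L : ℕ) (N : ℕ → ℕ), (∀ ℓ ≤ L, 1 ≤ N ℓ) ∧
        (∑ ℓ ∈ range (L + 1), variance (Y ℓ) P / (N ℓ : ℝ))
            + (∫ ω, (Qlev L ω - Q ω) ∂P) ^ 2 ≤ ε ^ 2 ∧
        ∑ ℓ ∈ range (L + 1), (N ℓ : ℝ) * (c₃ * (h₀ / (M : ℝ) ^ ℓ) ^ (-γ))
            ≤ K * ε ^ (-2 : ℝ) * Real.log ε ^ 2 := by
  have hMR : (1:ℝ) < (M:ℝ) := by exact_mod_cast lt_of_lt_of_le one_lt_two hM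
  have hM0 : (0:ℝ) < (M:ℝ) := lt_trans one_pos hMR
  have hb : 0 < Real.log M := Real.log_pos hMR
  set b := Real.log (M:ℝ) with hbdef
  have hαb : 0 < α * b := mul_pos hα hb
  have hs2 : (0:ℝ) < Real.sqrt 2 := Real.sqrt_pos.mpr (by norm_num)
  set B := Real.sqrt 2 * c₁ * h₀ ^ (α:ℝ) with hBdef
  have hB : 0 < B := by
    have : (0:ℝ) < h₀ ^ (α:ℝ) := Real.rpow_pos_of_pos hh₀ _
    positivity
  have hγα : γ / α ≤ 2 := by
    have hmin : min β γ = γ := by rw [hβγ, min_self]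
    rw [hmin] at hαβγ
    rw [div_le_iff₀ hα]; linarith
  set D := c₃ * h₀ ^ (-γ) * (M:ℝ) ^ (γ:ℝ) * (1 + B ^ (γ/α)) with hDdef
  have hD : 0 < D := by positivity
  set C := (|Real.log B| + 1) / (α*b) + 2 with hCdef
  have hC : 0 < C := by positivity
  refine ⟨(2*c₂*c₃ + D) * C^2, by positivity, ?_⟩
  intro ε hε hεe
  have hexp1 : Real.exp (-1:ℝ) < 1 := by
    rw [show (1:ℝ) = Real.exp 0 by rw [Real.exp_zero]]
    exact Real.exp_lt_exp.mpr (by norm_num)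
  have hε1 : ε < 1 := lt_trans hεe hexp1
  have hlogε : Real.log ε < -1 := by
    have := Real.log_lt_log hε hεe
    rwa [Real.log_exp] at this
  set Lε := -Real.log ε with hLεdef
  have hLε1 : 1 ≤ Lε := by rw [hLεdef]; linarith
  have hLε0 : 0 < Lε := lt_of_lt_of_le one_pos hLε1
  set A := Real.log (B/ε) / (α*b) with hAdef
  set L := ⌈A⌉₊ with hLdef
  have hAL : A ≤ (L:ℝ) := Nat.le_ceil A
  have hAmul : A * (α*b) = Real.log (B/ε) := div_mul_cancel₀ _ (ne_of_gt hαb)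
  set N : ℕ → ℕ := fun ℓ => ⌈2*((L:ℝ)+1)*c₂*(h₀/(M:ℝ)^ℓ)^β / ε^2⌉₊ with hNdef
  have hhpos : ∀ ℓ:ℕ, 0 < h₀/(M:ℝ)^ℓ := fun ℓ => div_pos hh₀ (pow_pos hM0 ℓ)
  have hxpos : ∀ ℓ:ℕ, 0 < 2*((L:ℝ)+1)*c₂*(h₀/(M:ℝ)^ℓ)^β / ε^2 := by
    intro ℓ
    have := Real.rpow_pos_of_pos (hhpos ℓ) β
    positivity
  have hN1 : ∀ ℓ, 1 ≤ N ℓ := fun ℓ => Nat.one_le_ceil_iff.mpr (hxpos ℓ)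
  have hNx : ∀ ℓ:ℕ, 2*((L:ℝ)+1)*c₂*(h₀/(M:ℝ)^ℓ)^β / ε^2 ≤ (N ℓ:ℝ) := fun ℓ => Nat.le_ceil _
  have hNpos : ∀ ℓ, (0:ℝ) < N ℓ := fun ℓ => lt_of_lt_of_le (hxpos ℓ) (hNx ℓ)
  -- bias bound
  have hML : B/ε ≤ (M:ℝ) ^ ((L:ℝ)*α) := by
    rw [Real.rpow_def_of_pos hM0]
    have h1 : Real.log (B/ε) ≤ (L:ℝ)*(α*b) := by
      calc Real.log (B/ε) = A*(α*b) := hAmul.symm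
      _ ≤ (L:ℝ)*(α*b) := mul_le_mul_of_nonneg_right hAL hαb.le
    calc B/ε = Real.exp (Real.log (B/ε)) := (Real.exp_log (div_pos hB hε)).symm
    _ ≤ Real.exp (b * ((L:ℝ)*α)) := by
        apply Real.exp_le_exp.mpr
        calc Real.log (B/ε) ≤ (L:ℝ)*(α*b) := h1
        _ = b*((L:ℝ)*α) := by ring
  have hbias : c₁ * (h₀/(M:ℝ)^L)^α ≤ ε / Real.sqrt 2 := by
    have hXpos : 0 < (M:ℝ)^((L:ℝ)*α) := Real.rpow_pos_of_pos hM0 _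
    have hrw : (h₀/(M:ℝ)^L)^α = h₀^(α:ℝ) / (M:ℝ)^((L:ℝ)*α) := by
      rw [Real.div_rpow hh₀.le (pow_nonneg hM0.le _), ← Real.rpow_natCast (M:ℝ) L,
        ← Real.rpow_mul hM0.le]
    rw [hrw, show c₁ * (h₀^(α:ℝ) / (M:ℝ)^((L:ℝ)*α)) = c₁*h₀^(α:ℝ) / (M:ℝ)^((L:ℝ)*α) by ring]
    have h3 : c₁*h₀^(α:ℝ) / (M:ℝ)^((L:ℝ)*α) ≤ c₁*h₀^(α:ℝ) / (B/ε) :=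
      div_le_div_of_nonneg_left' (mul_pos hc₁ (Real.rpow_pos_of_pos hh₀ α)).le
        (div_pos hB hε) hML
    refine h3.trans_eq ?_
    rw [hBdef]
    field_simp
    all_goals ring
  have hbias2 : (∫ ω, (Qlev L ω - Q ω) ∂P)^2 ≤ ε^2/2 := by
    have h2 : |∫ ω, (Qlev L ω - Q ω) ∂P| ≤ ε / Real.sqrt 2 := le_trans (hM1 L) hbias
    rw [← sq_abs]
    calc |∫ ω, (Qlev L ω - Q ω) ∂P|^2 ≤ (ε/Real.sqrt 2)^2 :=
          pow_le_pow_left₀ (abs_nonneg _) h2 2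
    _ = ε^2/2 := by rw [div_pow, Real.sq_sqrt (by norm_num : (0:ℝ) ≤ 2)]
  -- variance bound
  have hvar : ∑ ℓ ∈ range (L+1), variance (Y ℓ) P / (N ℓ:ℝ) ≤ ε^2/2 := by
    have hterm : ∀ ℓ ∈ range (L+1),
        variance (Y ℓ) P / (N ℓ:ℝ) ≤ ε^2/(2*((L:ℝ)+1)) := by
      intro ℓ _
      have hfpos : 0 < (h₀/(M:ℝ)^ℓ)^β := Real.rpow_pos_of_pos (hhpos ℓ) β
      calc variance (Y ℓ) P / (N ℓ:ℝ) ≤ (c₂*(h₀/(M:ℝ)^ℓ)^β) / (N ℓ:ℝ) :=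
            div_le_div_of_nonneg_right' (hM2 ℓ) (hNpos ℓ)
      _ ≤ (c₂*(h₀/(M:ℝ)^ℓ)^β) / (2*((L:ℝ)+1)*c₂*(h₀/(M:ℝ)^ℓ)^β / ε^2) :=
            div_le_div_of_nonneg_left' (by positivity) (hxpos ℓ) (hNx ℓ)
      _ = ε^2/(2*((L:ℝ)+1)) := by
            have hL1 : ((L:ℝ)+1) ≠ 0 := by positivity
            field_simp
    calc ∑ ℓ ∈ range (L+1), variance (Y ℓ) P / (N ℓ:ℝ)
        ≤ ∑ _ℓ ∈ range (L+1), ε^2/(2*((L:ℝ)+1)) := Finset.sum_le_sum hterm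
    _ = ((L:ℝ)+1) * (ε^2/(2*((L:ℝ)+1))) := by
        rw [Finset.sum_const, card_range, nsmul_eq_mul]; push_cast; ring
    _ = ε^2/2 := by
        have hL1 : ((L:ℝ)+1) ≠ 0 := by positivity
        field_simp
  -- cost bound
  have hε2 : ε ^ (-2:ℝ) = (ε^2)⁻¹ := by
    rw [show (-2:ℝ) = -((2:ℕ):ℝ) by norm_num, Real.rpow_neg hε.le, Real.rpow_natCast]
  have hεinv1 : 1 ≤ ε^(-2:ℝ) := by
    rw [show (1:ℝ) = ε^(0:ℝ) by rw [Real.rpow_zero]]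
    exact Real.rpow_le_rpow_of_exponent_ge hε hε1.le (by norm_num)
  have hεγ : ε ^ (-(γ/α)) ≤ ε ^ (-2:ℝ) :=
    Real.rpow_le_rpow_of_exponent_ge hε hε1.le (by linarith)
  have hLmax : (L:ℝ) ≤ max A 0 + 1 := by
    rcases le_or_gt A 0 with h|h
    · rw [hLdef, Nat.ceil_eq_zero.mpr h]
      have := le_max_right A 0
      norm_num
      linarith
    · have h1 := (Nat.ceil_lt_add_one h.le).le
      rw [max_eq_left h.le]
      exact_mod_cast h1
  have hMLγ : (M:ℝ) ^ ((L:ℝ)*γ) ≤ (M:ℝ)^(γ:ℝ) * ((1 + B^(γ/α)) * ε^(-2:ℝ)) := by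
    have step1 : (M:ℝ) ^ ((L:ℝ)*γ) ≤ (M:ℝ) ^ ((max A 0 + 1)*γ) := by
      apply Real.rpow_le_rpow_of_exponent_le hMR.le
      exact mul_le_mul_of_nonneg_right hLmax hγ.le
    have step2 : (M:ℝ) ^ ((max A 0 + 1)*γ) = (M:ℝ)^(γ:ℝ) * (M:ℝ)^(max A 0 * γ) := by
      rw [show (max A 0 + 1)*γ = γ + max A 0 * γ by ring, Real.rpow_add hM0]
    have step3 : (M:ℝ)^(max A 0 * γ) ≤ (1 + B^(γ/α)) * ε^(-2:ℝ) := by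
      rcases le_or_gt A 0 with h|h
      · rw [max_eq_right h, zero_mul, Real.rpow_zero]
        have hBγ : 0 ≤ B^(γ/α) := (Real.rpow_pos_of_pos hB _).le
        have h' : (1:ℝ)*1 ≤ (1+B^(γ/α))*ε^(-2:ℝ) :=
          mul_le_mul (by linarith) hεinv1 zero_le_one (by linarith)
        linarith
      · rw [max_eq_left h.le]
        have e1 : (M:ℝ)^(A*γ) = (B/ε)^(γ/α) := by
          rw [Real.rpow_def_of_pos hM0, Real.rpow_def_of_pos (div_pos hB hε)]
          congr 1
          rw [hAdef]
          field_simp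
          ring
        have e2 : (B/ε)^(γ/α) = B^(γ/α) * ε^(-(γ/α)) := by
          rw [Real.div_rpow hB.le hε.le, Real.rpow_neg hε.le, div_eq_mul_inv]
        rw [e1, e2]
        have hBγ : 0 ≤ B^(γ/α) := (Real.rpow_pos_of_pos hB _).le
        have hεpos : 0 ≤ ε^(-(γ/α)) := (Real.rpow_pos_of_pos hε _).le
        apply mul_le_mul (by linarith) hεγ hεpos (by linarith)
    calc (M:ℝ) ^ ((L:ℝ)*γ) ≤ (M:ℝ) ^ ((max A 0 + 1)*γ) := step1
    _ = (M:ℝ)^(γ:ℝ) * (M:ℝ)^(max A 0 * γ) := step2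
    _ ≤ (M:ℝ)^(γ:ℝ) * ((1 + B^(γ/α)) * ε^(-2:ℝ)) := by
        apply mul_le_mul_of_nonneg_left step3 (Real.rpow_pos_of_pos hM0 _).le
  have hcostterm : ∀ ℓ ∈ range (L+1),
      (N ℓ:ℝ) * (c₃ * (h₀/(M:ℝ)^ℓ)^(-γ)) ≤ (((L:ℝ)+1)*(2*c₂*c₃) + D) * ε^(-2:ℝ) := by
    intro ℓ hℓ
    have hℓL : ℓ ≤ L := Nat.lt_succ_iff.mp (Finset.mem_range.mp hℓ)
    have hgpos : 0 < (h₀/(M:ℝ)^ℓ)^(-γ) := Real.rpow_pos_of_pos (hhpos ℓ) _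
    have hfpos : 0 < (h₀/(M:ℝ)^ℓ)^β := Real.rpow_pos_of_pos (hhpos ℓ) β
    have hceil : (N ℓ:ℝ) ≤ 2*((L:ℝ)+1)*c₂*(h₀/(M:ℝ)^ℓ)^β / ε^2 + 1 :=
      (Nat.ceil_lt_add_one (hxpos ℓ).le).le
    have hpow1 : (h₀/(M:ℝ)^ℓ)^β * (h₀/(M:ℝ)^ℓ)^(-γ) = 1 := by
      rw [← Real.rpow_add (hhpos ℓ), hβγ, add_neg_cancel, Real.rpow_zero]
    have hrwℓ : (h₀/(M:ℝ)^ℓ)^(-γ) = h₀^(-γ) * (M:ℝ)^((ℓ:ℝ)*γ) := by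
      rw [Real.div_rpow hh₀.le (pow_nonneg hM0.le _), ← Real.rpow_natCast (M:ℝ) ℓ,
        ← Real.rpow_mul hM0.le, show (ℓ:ℝ)*(-γ) = -((ℓ:ℝ)*γ) by ring,
        Real.rpow_neg hM0.le, div_eq_mul_inv, inv_inv]
    have hd : c₃ * (h₀/(M:ℝ)^ℓ)^(-γ) ≤ D * ε^(-2:ℝ) := by
      rw [hrwℓ]
      have hmono : (M:ℝ)^((ℓ:ℝ)*γ) ≤ (M:ℝ)^((L:ℝ)*γ) := by
        apply Real.rpow_le_rpow_of_exponent_le hMR.le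
        have h' : (ℓ:ℝ) ≤ (L:ℝ) := by exact_mod_cast hℓL
        exact mul_le_mul_of_nonneg_right h' hγ.le
      have hh₀γ : 0 < h₀^(-γ:ℝ) := Real.rpow_pos_of_pos hh₀ _
      calc c₃ * (h₀^(-γ:ℝ) * (M:ℝ)^((ℓ:ℝ)*γ))
          ≤ c₃ * (h₀^(-γ:ℝ) * ((M:ℝ)^(γ:ℝ) * ((1 + B^(γ/α)) * ε^(-2:ℝ)))) := by
            apply mul_le_mul_of_nonneg_left _ hc₃.le
            apply mul_le_mul_of_nonneg_left _ hh₀γ.le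
            exact hmono.trans hMLγ
      _ = D * ε^(-2:ℝ) := by rw [hDdef]; ring
    calc (N ℓ:ℝ) * (c₃ * (h₀/(M:ℝ)^ℓ)^(-γ))
        ≤ (2*((L:ℝ)+1)*c₂*(h₀/(M:ℝ)^ℓ)^β / ε^2 + 1) * (c₃ * (h₀/(M:ℝ)^ℓ)^(-γ)) := by
          apply mul_le_mul_of_nonneg_right hceil (by positivity)
    _ = 2*((L:ℝ)+1)*c₂*c₃*((h₀/(M:ℝ)^ℓ)^β * (h₀/(M:ℝ)^ℓ)^(-γ))/ε^2
          + c₃ * (h₀/(M:ℝ)^ℓ)^(-γ) := by ring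
    _ = ((L:ℝ)+1)*(2*c₂*c₃) * ε^(-2:ℝ) + c₃ * (h₀/(M:ℝ)^ℓ)^(-γ) := by
          rw [hpow1, hε2]; ring
    _ ≤ ((L:ℝ)+1)*(2*c₂*c₃) * ε^(-2:ℝ) + D * ε^(-2:ℝ) := by linarith
    _ = (((L:ℝ)+1)*(2*c₂*c₃) + D) * ε^(-2:ℝ) := by ring
  -- (L+1) ≤ C * Lε
  have hCL : (L:ℝ) + 1 ≤ C * Lε := by
    have habs : 0 ≤ |Real.log B| := abs_nonneg _
    have hA' : A ≤ (|Real.log B| + Lε)/(α*b) := by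
      rw [hAdef]
      apply div_le_div_of_nonneg_right _ hαb.le
      rw [Real.log_div hB.ne' hε.ne']
      have := le_abs_self (Real.log B)
      linarith
    have hmax : max A 0 ≤ (|Real.log B| + Lε)/(α*b) := max_le hA' (by positivity)
    have h1 : (|Real.log B| + Lε)/(α*b) ≤ ((|Real.log B|+1)/(α*b)) * Lε := by
      rw [div_mul_eq_mul_div]
      apply div_le_div_of_nonneg_right _ hαb.le
      have h' := mul_le_mul_of_nonneg_left hLε1 habs
      rw [mul_one] at h'
      linarith
    have h2 : (2:ℝ) ≤ 2 * Lε := by linarith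
    calc (L:ℝ) + 1 ≤ (max A 0 + 1) + 1 := by linarith
    _ ≤ (|Real.log B| + Lε)/(α*b) + 2 := by linarith
    _ ≤ ((|Real.log B|+1)/(α*b)) * Lε + 2 * Lε := by linarith
    _ = C * Lε := by rw [hCdef]; ring
  refine ⟨L, N, fun ℓ _ => hN1 ℓ, by linarith, ?_⟩
  have hsum : ∑ ℓ ∈ range (L+1), (N ℓ:ℝ) * (c₃ * (h₀/(M:ℝ)^ℓ)^(-γ))
      ≤ ((L:ℝ)+1) * ((((L:ℝ)+1)*(2*c₂*c₃) + D) * ε^(-2:ℝ)) := by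
    calc ∑ ℓ ∈ range (L+1), (N ℓ:ℝ) * (c₃ * (h₀/(M:ℝ)^ℓ)^(-γ))
        ≤ ∑ _ℓ ∈ range (L+1), ((((L:ℝ)+1)*(2*c₂*c₃) + D) * ε^(-2:ℝ)) :=
          Finset.sum_le_sum hcostterm
    _ = ((L:ℝ)+1) * ((((L:ℝ)+1)*(2*c₂*c₃) + D) * ε^(-2:ℝ)) := by
        rw [Finset.sum_const, card_range, nsmul_eq_mul]; push_cast; ring
  refine hsum.trans ?_
  have hP1 : (1:ℝ) ≤ (L:ℝ) + 1 := by
    have : (0:ℝ) ≤ (L:ℝ) := Nat.cast_nonneg L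
    linarith
  have hP2 : ((L:ℝ)+1)^2 ≤ C^2 * Real.log ε ^ 2 := by
    have hsq : ((L:ℝ)+1)^2 ≤ (C*Lε)^2 := by
      apply pow_le_pow_left₀ (by positivity) hCL
    have heq : (C*Lε)^2 = C^2 * Real.log ε ^2 := by
      rw [hLεdef]; ring
    linarith
  have hεinv0 : 0 ≤ ε^(-2:ℝ) := (Real.rpow_pos_of_pos hε _).le
  have key : ((L:ℝ)+1) * (((L:ℝ)+1)*(2*c₂*c₃) + D) ≤ (2*c₂*c₃+D) * (C^2 * Real.log ε^2) := by
    have hPP : (L:ℝ)+1 ≤ ((L:ℝ)+1)^2 := by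
      calc (L:ℝ)+1 = ((L:ℝ)+1)*1 := by ring
      _ ≤ ((L:ℝ)+1)*((L:ℝ)+1) := mul_le_mul_of_nonneg_left hP1 (by positivity)
      _ = ((L:ℝ)+1)^2 := by ring
    have hPS : (L:ℝ)+1 ≤ C^2 * Real.log ε^2 := hPP.trans hP2
    calc ((L:ℝ)+1) * (((L:ℝ)+1)*(2*c₂*c₃) + D)
        = ((L:ℝ)+1)^2*(2*c₂*c₃) + ((L:ℝ)+1)*D := by ring
    _ ≤ (C^2 * Real.log ε^2)*(2*c₂*c₃) + (C^2 * Real.log ε^2)*D :=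
        add_le_add (mul_le_mul_of_nonneg_right hP2 (by positivity))
          (mul_le_mul_of_nonneg_right hPS hD.le)
    _ = (2*c₂*c₃+D) * (C^2 * Real.log ε^2) := by ring
  calc ((L:ℝ)+1) * ((((L:ℝ)+1)*(2*c₂*c₃) + D) * ε^(-2:ℝ))
      = (((L:ℝ)+1) * (((L:ℝ)+1)*(2*c₂*c₃) + D)) * ε^(-2:ℝ) := by ring
  _ ≤ ((2*c₂*c₃+D) * (C^2 * Real.log ε^2)) * ε^(-2:ℝ) :=
      mul_le_mul_of_nonneg_right key hεinv0
  _ = (2*c₂*c₃ + D) * C^2 * ε^(-2:ℝ) * Real.log ε^2 := by ring
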